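/- For each k ≥ 1, let P_k be the polynomial in ℤ[x,y,z] defined by P_k = Σ_M x^{pc(M)} · y^{lc(M)−1} · z^{ne(M)}, where the sum is over all primitive Fishburn matrices M of size k, lc(M) is the weight of the last column of M, pc(M) is the total weight of the first k−1 columns of M, and ne(M) is the number of wNE-cells of M. Then for every k ≥ 1 the identity P_{k+1}(x,y,z) = (xz + xy + y) · P_k(x, x+y+xy, z) − y · P_k(x,y,z) holds in ℤ[x,y,z], where P_k(x, x+y+xy, z) denotes the polynomial obtained from P_k by substituting x+y+xy for the variable y. -/

import Mathlib

open scoped Classical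

namespace FishburnPaper

universe u

/-- A strict partial order: irreflexive and transitive. -/
def StrictOrd {X : Type u} (Q : X → X → Prop) : Prop :=
  (∀ x, ¬ Q x x) ∧ ∀ ⦃x y z⦄, Q x y → Q y z → Q x z

/-- `x` and `y` are comparable by the relation `Q`. -/
def Cmp {X : Type u} (Q : X → X → Prop) (x y : X) : Prop := Q x y ∨ Q y x

/-- Exactly one of the three propositions holds. -/
def ExactlyOne3 (a b c : Prop) : Prop :=
  (a ∨ b ∨ c) ∧ ¬ (a ∧ b) ∧ ¬ (a ∧ c) ∧ ¬ (b ∧ c)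

/-- A C1-pair: `S` and `R` are strict partial orders, any two distinct elements are
comparable by exactly one of them, and `x S y → y R z → x R z` for distinct `x,y,z`. -/
def IsC1Pair {X : Type u} (S R : X → X → Prop) : Prop :=
  StrictOrd S ∧ StrictOrd R ∧
  (∀ x y : X, x ≠ y → Xor' (Cmp S x y) (Cmp R x y)) ∧
  (∀ x y z : X, x ≠ y → y ≠ z → x ≠ z → S x y → R y z → R x z)

/-- A C2-pair: `R` and `T ∪ R` are strict partial orders, any two distinct elements are
comparable by exactly one of `T` and `R`, and the two three-element patterns are forbidden. -/
def IsC2Pair {X : Type u} (T R : X → X → Prop) : Prop :=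
  StrictOrd R ∧ StrictOrd (fun x y => T x y ∨ R x y) ∧
  (∀ x y : X, x ≠ y → Xor' (Cmp T x y) (Cmp R x y)) ∧
  (¬ ∃ x y z : X, x ≠ y ∧ y ≠ z ∧ x ≠ z ∧ T x y ∧ T x z ∧ R y z) ∧
  (¬ ∃ x y z : X, x ≠ y ∧ y ≠ z ∧ x ≠ z ∧ T y x ∧ T z x ∧ R y z)

/-- A Fishburn triple: `S`, `R` and `T ∪ R` are strict partial orders, any two distinct
elements are comparable by exactly one of `T`, `S`, `R`, the axioms C1c, C1c* hold,
and the two three-element patterns of axiom C2c are forbidden. -/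
def IsFishburnTriple {X : Type u} (T S R : X → X → Prop) : Prop :=
  StrictOrd S ∧ StrictOrd R ∧ StrictOrd (fun x y => T x y ∨ R x y) ∧
  (∀ x y : X, x ≠ y → ExactlyOne3 (Cmp T x y) (Cmp S x y) (Cmp R x y)) ∧
  (∀ x y z : X, x ≠ y → y ≠ z → x ≠ z → S x y → R y z → R x z) ∧
  (∀ x y z : X, x ≠ y → y ≠ z → x ≠ z → S x y → R z y → R z x) ∧
  (¬ ∃ x y z : X, x ≠ y ∧ y ≠ z ∧ x ≠ z ∧ T x y ∧ T x z ∧ R y z) ∧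
  (¬ ∃ x y z : X, x ≠ y ∧ y ≠ z ∧ x ≠ z ∧ T y x ∧ T z x ∧ R z y)

/-- `R` contains the poset 2+2: four distinct elements `a,b,c,d` with `a R b`, `c R d`,
and no other ordered pair among them in `R`. -/
def Contains22 {X : Type u} (R : X → X → Prop) : Prop :=
  ∃ a b c d : X, a ≠ b ∧ a ≠ c ∧ a ≠ d ∧ b ≠ c ∧ b ≠ d ∧ c ≠ d ∧
    R a b ∧ R c d ∧
    ¬ R b a ∧ ¬ R a c ∧ ¬ R c a ∧ ¬ R a d ∧ ¬ R d a ∧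
    ¬ R b c ∧ ¬ R c b ∧ ¬ R b d ∧ ¬ R d b ∧ ¬ R d c

/-- `R` contains the poset 3+1: four distinct elements `a,b,c,d` with `a R b`, `b R c`,
`a R c`, and `d` incomparable to each of `a,b,c`. -/
def Contains31 {X : Type u} (R : X → X → Prop) : Prop :=
  ∃ a b c d : X, a ≠ b ∧ a ≠ c ∧ a ≠ d ∧ b ≠ c ∧ b ≠ d ∧ c ≠ d ∧
    R a b ∧ R b c ∧ R a c ∧ ¬ Cmp R d a ∧ ¬ Cmp R d b ∧ ¬ Cmp R d c

/-- `R` contains the poset N: four distinct elements `u,v,x,y` with `u R v`, `u R y`,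
`x R v`, and no other ordered pair among them in `R`. -/
def ContainsN {X : Type u} (R : X → X → Prop) : Prop :=
  ∃ u v x y : X, u ≠ v ∧ u ≠ x ∧ u ≠ y ∧ v ≠ x ∧ v ≠ y ∧ x ≠ y ∧
    R u v ∧ R u y ∧ R x v ∧
    ¬ R v u ∧ ¬ R u x ∧ ¬ R x u ∧ ¬ R y u ∧ ¬ R v x ∧ ¬ R v y ∧
    ¬ R y v ∧ ¬ R x y ∧ ¬ R y x

/-- Number of `Q`-maximal elements. -/
noncomputable def mmax {X : Type u} (Q : X → X → Prop) : ℕ :=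
  Nat.card {x : X // ∀ y : X, ¬ Q x y}

/-- A Fishburn matrix: upper triangular (rows numbered top to bottom), every row and
every column contains a nonzero entry. -/
def IsFishburn {m : ℕ} (M : Fin m → Fin m → ℕ) : Prop :=
  (∀ i j : Fin m, j < i → M i j = 0) ∧
  (∀ i : Fin m, ∃ j : Fin m, M i j ≠ 0) ∧
  (∀ j : Fin m, ∃ i : Fin m, M i j ≠ 0)

/-- A cell `(i, j)` of an `m × m` matrix. -/
abbrev Cell (m : ℕ) := Fin m × Fin m

/-- Cell `c = (i,j)` is smaller than `c' = (i',j')` if `j < i'`. -/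
def Smaller {m : ℕ} (c c' : Cell m) : Prop := c.2 < c'.1

/-- Cells `c` and `c'` are incomparable: neither is smaller than the other. -/
def Incomp {m : ℕ} (c c' : Cell m) : Prop := ¬ Smaller c c' ∧ ¬ Smaller c' c

/-- `c = (i,j)` is strictly SW of `c' = (i',j')` : `i > i'` and `j < j'`. -/
def StrictSW {m : ℕ} (c c' : Cell m) : Prop := c'.1 < c.1 ∧ c.2 < c'.2

/-- `c = (i,j)` is weakly SW of `c' = (i',j')` : `c ≠ c'`, `i ≥ i'` and `j ≤ j'`. -/
def WeakSW {m : ℕ} (c c' : Cell m) : Prop := c ≠ c' ∧ c'.1 ≤ c.1 ∧ c.2 ≤ c'.2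

/-- `c = (i,j)` is strictly NW of `c' = (i',j')` : incomparable, `i < i'` and `j < j'`. -/
def StrictNW {m : ℕ} (c c' : Cell m) : Prop := Incomp c c' ∧ c.1 < c'.1 ∧ c.2 < c'.2

/-- `c = (i,j)` is weakly NW of `c' = (i',j')` : `c ≠ c'`, incomparable, `i ≤ i'`, `j ≤ j'`. -/
def WeakNW {m : ℕ} (c c' : Cell m) : Prop := c ≠ c' ∧ Incomp c c' ∧ c.1 ≤ c'.1 ∧ c.2 ≤ c'.2

/-- A nonzero cell of `M` (on or above the diagonal). -/
def NonzeroCell {m : ℕ} (M : Fin m → Fin m → ℕ) (c : Cell m) : Prop :=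
  c.1 ≤ c.2 ∧ M c.1 c.2 ≠ 0

/-- The ground set `X_M = {(i,j,a) : i ≤ j, a < M i j}` of the poset induced by `M`. -/
abbrev XM {m : ℕ} (M : Fin m → Fin m → ℕ) : Type :=
  {x : Fin m × Fin m × ℕ // x.1 ≤ x.2.1 ∧ x.2.2 < M x.1 x.2.1}

/-- The cell representing an element of `X_M`. -/
def cellOf {m : ℕ} {M : Fin m → Fin m → ℕ} (x : XM M) : Cell m := (x.1.1, x.1.2.1)

/-- The interval order induced by `M`: `(i,j,a) R (i',j',a')` iff `j < i'`. -/
def Rind {m : ℕ} {M : Fin m → Fin m → ℕ} (x y : XM M) : Prop := x.1.2.1 < y.1.1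

/-- A nonzero cell with no other nonzero cell weakly NE of it. -/
def IsWNECell {m : ℕ} (M : Fin m → Fin m → ℕ) (c : Cell m) : Prop :=
  NonzeroCell M c ∧ ∀ c' : Cell m, NonzeroCell M c' → c' ≠ c → ¬ WeakSW c c'

/-- A nonzero cell with no other nonzero cell strictly NE of it. -/
def IsSNECell {m : ℕ} (M : Fin m → Fin m → ℕ) (c : Cell m) : Prop :=
  NonzeroCell M c ∧ ∀ c' : Cell m, NonzeroCell M c' → c' ≠ c → ¬ StrictSW c c'

/-- A nonzero cell with no other nonzero cell strictly SE of it. -/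
def IsSSECell {m : ℕ} (M : Fin m → Fin m → ℕ) (c : Cell m) : Prop :=
  NonzeroCell M c ∧ ∀ c' : Cell m, NonzeroCell M c' → c' ≠ c → ¬ StrictNW c c'

/-- A nonzero cell with no other nonzero cell weakly SE of it. -/
def IsWSECell {m : ℕ} (M : Fin m → Fin m → ℕ) (c : Cell m) : Prop :=
  NonzeroCell M c ∧ ∀ c' : Cell m, NonzeroCell M c' → c' ≠ c → ¬ WeakNW c c'

/-- The number of wNE-cells of `M`. -/
noncomputable def wNEcount {m : ℕ} (M : Fin m → Fin m → ℕ) : ℕ :=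
  Nat.card {c : Cell m // IsWNECell M c}

/-- The number of wSE-cells of `M`. -/
noncomputable def wSEcount {m : ℕ} (M : Fin m → Fin m → ℕ) : ℕ :=
  Nat.card {c : Cell m // IsWSECell M c}

/-- The total weight of the sNE-cells of `M`. -/
noncomputable def sNEweight {m : ℕ} (M : Fin m → Fin m → ℕ) : ℕ :=
  ∑ c : Cell m, if IsSNECell M c then M c.1 c.2 else 0

/-- The total weight of the sSE-cells of `M`. -/
noncomputable def sSEweight {m : ℕ} (M : Fin m → Fin m → ℕ) : ℕ :=
  ∑ c : Cell m, if IsSSECell M c then M c.1 c.2 else 0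

/-- The weight of `M`: the sum of all entries. -/
def weight {m : ℕ} (M : Fin m → Fin m → ℕ) : ℕ := ∑ c : Cell m, M c.1 c.2

/-- The weight of the last column of `M`. -/
def lastColWeight {m : ℕ} (M : Fin m → Fin m → ℕ) : ℕ :=
  ∑ c : Cell m, if c.2.val = m - 1 then M c.1 c.2 else 0

/-- The total weight of the columns of `M` preceding the last one. -/
def prevColWeight {m : ℕ} (M : Fin m → Fin m → ℕ) : ℕ :=
  ∑ c : Cell m, if c.2.val < m - 1 then M c.1 c.2 else 0

/-- The first component of the F1-triple of `M`: `x T₁ y` iff `c_x` strictly NW of `c_y`. -/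
def T1 {m : ℕ} {M : Fin m → Fin m → ℕ} (x y : XM M) : Prop :=
  StrictNW (cellOf x) (cellOf y)

/-- The second component of the F1-triple of `M`: `x S₁ y` iff `c_x` weakly SW of `c_y`,
or `c_x = c_y` and the third coordinate of `x` is smaller than that of `y`. -/
def S1 {m : ℕ} {M : Fin m → Fin m → ℕ} (x y : XM M) : Prop :=
  WeakSW (cellOf x) (cellOf y) ∨ (cellOf x = cellOf y ∧ x.1.2.2 < y.1.2.2)

/-- The first component of the F2-triple of `M`: `x T₂ y` iff `c_x` weakly NW of `c_y`,
or `c_x = c_y` and the third coordinate of `x` is smaller than that of `y`. -/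
def T2 {m : ℕ} {M : Fin m → Fin m → ℕ} (x y : XM M) : Prop :=
  WeakNW (cellOf x) (cellOf y) ∨ (cellOf x = cellOf y ∧ x.1.2.2 < y.1.2.2)

/-- The second component of the F2-triple of `M`: `x S₂ y` iff `c_x` strictly SW of `c_y`. -/
def S2 {m : ℕ} {M : Fin m → Fin m → ℕ} (x y : XM M) : Prop :=
  StrictSW (cellOf x) (cellOf y)

/-- C1-pairs on `Fin n`. -/
abbrev C1PairsOn (n : ℕ) :=
  {p : (Fin n → Fin n → Prop) × (Fin n → Fin n → Prop) // IsC1Pair p.1 p.2}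

/-- C2-pairs on `Fin n`. -/
abbrev C2PairsOn (n : ℕ) :=
  {p : (Fin n → Fin n → Prop) × (Fin n → Fin n → Prop) // IsC2Pair p.1 p.2}

/-- Isomorphism of C1-pairs. -/
def isoC1 {n : ℕ} (p q : C1PairsOn n) : Prop :=
  ∃ f : Fin n ≃ Fin n, ∀ x y : Fin n,
    (p.1.1 x y ↔ q.1.1 (f x) (f y)) ∧ (p.1.2 x y ↔ q.1.2 (f x) (f y))

/-- Isomorphism of C2-pairs. -/
def isoC2 {n : ℕ} (p q : C2PairsOn n) : Prop :=
  ∃ f : Fin n ≃ Fin n, ∀ x y : Fin n,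
    (p.1.1 x y ↔ q.1.1 (f x) (f y)) ∧ (p.1.2 x y ↔ q.1.2 (f x) (f y))

/-- Fishburn matrices of weight `n` (of arbitrary size `m ≥ 1`). -/
abbrev FishburnW (n : ℕ) :=
  {p : Σ m : ℕ, Fin m → Fin m → ℕ // 0 < p.1 ∧ IsFishburn p.2 ∧ weight p.2 = n}


open MvPolynomial in
/-- The polynomial `P_k = Σ_M x^{pc(M)} y^{lc(M)-1} z^{ne(M)}`, summed over all primitive
Fishburn matrices `M` of size `k` (encoded as 0/1-matrices via `Fin 2`). The variables
`x`, `y`, `z` are `X 0`, `X 1`, `X 2`. -/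
noncomputable def Pk (k : ℕ) : MvPolynomial (Fin 3) ℤ :=
  ∑ M : Fin k → Fin k → Fin 2,
    if IsFishburn (fun i j => ((M i j : ℕ))) then
      X 0 ^ prevColWeight (fun i j => ((M i j : ℕ))) *
      X 1 ^ (lastColWeight (fun i j => ((M i j : ℕ))) - 1) *
      X 2 ^ wNEcount (fun i j => ((M i j : ℕ)))
    else 0

open Finset MvPolynomial

variable {k : ℕ}

/-- the last index of `Fin k` (needs `0 < k`). -/
def Lst (k : ℕ) (hk : 0 < k) : Fin k := ⟨k - 1, by omega⟩

/-- assemble a `(k+1)`-matrix from a `k`-matrix and a choice function.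
`g i = 0`: the last-column cell of row `i` stays in column `k-1`;
`g i = 1`: it moves to column `k`; `g i = 2`: both. -/
def Emat (N : Fin k → Fin k → Fin 2) (g : Fin k → Fin 3) :
    Fin (k+1) → Fin (k+1) → Fin 2 := fun i j =>
  if hi : i.val < k then
    if hj : j.val < k then
      (if j.val = k - 1 ∧ g ⟨i.val, hi⟩ = 1 then 0 else N ⟨i.val, hi⟩ ⟨j.val, hj⟩)
    else (if g ⟨i.val, hi⟩ = 0 then 0 else N ⟨i.val, hi⟩ ⟨k - 1, by omega⟩)
  else (if j.val < k then 0 else 1)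

/-- disassembled matrix: merge the last two columns. -/
def Dmat (M : Fin (k+1) → Fin (k+1) → Fin 2) : Fin k → Fin k → Fin 2 := fun i j =>
  if j.val = k - 1 then max (M i.castSucc j.castSucc) (M i.castSucc (Fin.last k))
  else M i.castSucc j.castSucc

/-- disassembled choice function. -/
def Dch (M : Fin (k+1) → Fin (k+1) → Fin 2) : Fin k → Fin 3 := fun i =>
  if M i.castSucc (Fin.last k) = 0 then 0
  else if M i.castSucc ⟨k - 1, by omega⟩ = 0 then 1 else 2

/-- `g` is standard for `N`: zero on rows whose last-column entry vanishes. -/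
def Std (N : Fin k → Fin k → Fin 2) (g : Fin k → Fin 3) : Prop :=
  ∀ i j : Fin k, j.val = k - 1 → N i j = 0 → g i = 0

/-- not all nonzero last-column cells move. -/
def NAY (N : Fin k → Fin k → Fin 2) (g : Fin k → Fin 3) : Prop :=
  ∃ i j : Fin k, j.val = k - 1 ∧ N i j ≠ 0 ∧ g i ≠ 1



variable {k : ℕ}

def ncoe {n : ℕ} (M : Fin n → Fin n → Fin 2) : Fin n → Fin n → ℕ := fun i j => ((M i j : ℕ))

lemma ncoe_ne {n : ℕ} (M : Fin n → Fin n → Fin 2) (i j : Fin n) :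
    ncoe M i j ≠ 0 ↔ M i j ≠ 0 := by
  simp [ncoe]

lemma fin2_eq_one (a : Fin 2) (h : a ≠ 0) : a = 1 := by
  fin_cases a
  · exact absurd rfl h
  · rfl

lemma fin2_max : ∀ a b : Fin 2, max a b = 0 ↔ a = 0 ∧ b = 0 := by decide

lemma fin3_cases (a : Fin 3) : a = 0 ∨ a = 1 ∨ a = 2 := by fin_cases a <;> simp

/-- the corner entry of a Fishburn matrix is nonzero -/
lemma corner_ne (hk : 0 < k) (N : Fin k → Fin k → Fin 2)
    (hF : IsFishburn (ncoe N)) : N (Lst k hk) (Lst k hk) ≠ 0 := by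
  obtain ⟨htri, hrow, -⟩ := hF
  obtain ⟨j, hj⟩ := hrow (Lst k hk)
  have hle : ¬ j < Lst k hk := fun hlt => hj (htri _ _ hlt)
  have hval : (Lst k hk).val = k - 1 := rfl
  have hj2 : j = Lst k hk := by
    have h1 := j.isLt
    rw [Fin.lt_def, not_lt, hval] at hle
    exact Fin.ext (by omega)
  rw [hj2] at hj
  exact (ncoe_ne N _ _).mp hj



variable {k : ℕ}

lemma ncoe_eq_zero {n : ℕ} (M : Fin n → Fin n → Fin 2) (i j : Fin n) :
    ncoe M i j = 0 ↔ M i j = 0 := by simp [ncoe]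

lemma fin2_cases (a : Fin 2) : a = 0 ∨ a = 1 := by
  fin_cases a
  · exact Or.inl rfl
  · exact Or.inr rfl

lemma fin2_max_zero_right : ∀ a : Fin 2, max a 0 = a := by decide
lemma fin2_max_zero_left : ∀ a : Fin 2, max 0 a = a := by decide
lemma fin2_max_self : ∀ a : Fin 2, max a a = a := by decide
lemma f3_01 : (0 : Fin 3) ≠ 1 := by decide
lemma f3_21 : (2 : Fin 3) ≠ 1 := by decide
lemma f3_10 : (1 : Fin 3) ≠ 0 := by decide
lemma f3_20 : (2 : Fin 3) ≠ 0 := by decide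

lemma Emat_lo (N : Fin k → Fin k → Fin 2) (g : Fin k → Fin 3) (i j : Fin k) :
    Emat N g i.castSucc j.castSucc = if j.val = k - 1 ∧ g i = 1 then 0 else N i j := by
  have hi : (Fin.castSucc i).val < k := i.isLt
  have hj : (Fin.castSucc j).val < k := j.isLt
  simp only [Emat, dif_pos hi, dif_pos hj]
  rfl

lemma Emat_hi (N : Fin k → Fin k → Fin 2) (g : Fin k → Fin 3) (i : Fin k) (hk : 0 < k) :
    Emat N g i.castSucc (Fin.last k) = if g i = 0 then 0 else N i (Lst k hk) := by
  have hi : (Fin.castSucc i).val < k := i.isLt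
  have hj : ¬ (Fin.last k).val < k := by simp
  simp only [Emat, dif_pos hi, dif_neg hj]
  rfl

lemma Emat_row_last (N : Fin k → Fin k → Fin 2) (g : Fin k → Fin 3) (j : Fin (k+1)) :
    Emat N g (Fin.last k) j = if j.val < k then 0 else 1 := by
  have hi : ¬ (Fin.last k).val < k := by simp
  simp only [Emat, dif_neg hi]

lemma Dmat_Emat (N : Fin k → Fin k → Fin 2) (g : Fin k → Fin 3) :
    Dmat (Emat N g) = N := by
  funext i j
  have hk : 0 < k := i.pos
  by_cases hj : j.val = k - 1
  · have hjL : j = Lst k hk := Fin.ext hj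
    subst hjL
    simp only [Dmat, if_pos hj]
    rw [Emat_lo, Emat_hi N g i hk]
    have hLv : (Lst k hk).val = k - 1 := rfl
    rcases fin3_cases (g i) with h|h|h <;>
      simp [h, hLv, f3_01, f3_21, f3_10, f3_20, fin2_max_zero_right, fin2_max_zero_left,
        fin2_max_self, Lst]
  · simp only [Dmat, if_neg hj]
    rw [Emat_lo, if_neg]
    intro hc
    exact hj hc.1

lemma Dch_Emat (N : Fin k → Fin k → Fin 2) (g : Fin k → Fin 3) (hS : Std N g) :
    Dch (Emat N g) = g := by
  funext i
  have hk : 0 < k := i.pos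
  have hcl : (⟨k - 1, by omega⟩ : Fin (k+1)) = (Lst k hk).castSucc := rfl
  simp only [Dch, hcl]
  rw [Emat_hi N g i hk, Emat_lo]
  have hLv : (Lst k hk).val = k - 1 := rfl
  by_cases hN : N i (Lst k hk) = 0
  · rcases fin3_cases (g i) with h|h|h <;>
      simp_all [hS i (Lst k hk) hLv hN]
  · rcases fin3_cases (g i) with h|h|h <;>
      simp [h, hN, hLv, f3_01, f3_21, f3_10, f3_20]



variable {k : ℕ}

lemma Emat_Dmat (M : Fin (k+1) → Fin (k+1) → Fin 2) (hF : IsFishburn (ncoe M)) :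
    Emat (Dmat M) (Dch M) = M := by
  obtain ⟨htri, hrow, hcol⟩ := hF
  have htri' : ∀ a b : Fin (k+1), b < a → M a b = 0 := by
    intro a b h; exact (ncoe_eq_zero M a b).mp (htri a b h)
  funext i j
  by_cases hi : i.val < k
  · have hk : 0 < k := by omega
    have hieq : i = (⟨i.val, hi⟩ : Fin k).castSucc := Fin.ext rfl
    rw [hieq]
    set i₀ : Fin k := ⟨i.val, hi⟩ with hi0
    by_cases hj : j.val < k
    · have hjeq : j = (⟨j.val, hj⟩ : Fin k).castSucc := Fin.ext rfl
      rw [hjeq]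
      set j₀ : Fin k := ⟨j.val, hj⟩ with hj0
      rw [Emat_lo]
      simp only [Dch, Dmat]
      by_cases hj1 : (j₀ : Fin k).val = k - 1
      · have hcast : (⟨k-1, by omega⟩ : Fin (k+1)) = j₀.castSucc := Fin.ext hj1.symm
        simp only [hcast]
        by_cases hml : M i₀.castSucc (Fin.last k) = 0
        · simp [hml, hj1, f3_01, fin2_max_zero_right]
        · by_cases hmc : M i₀.castSucc j₀.castSucc = 0
          · simp [hml, hmc, hj1]
          · have hj1' : (j : ℕ) = k - 1 := hj1
            rw [fin2_eq_one _ hmc, fin2_eq_one _ hml]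
            simp [hj1', f3_21, sup_idem]
      · simp [hj1, Dmat]
    · have hjeq : j = Fin.last k := Fin.ext (by simp only [Fin.val_last]; have := j.isLt; omega)
      rw [hjeq, Emat_hi _ _ _ hk]
      simp only [Dch, Dmat]
      have hLv : (Lst k hk).val = k - 1 := rfl
      have hcast : (Lst k hk).castSucc = (⟨k-1, by omega⟩ : Fin (k+1)) := rfl
      by_cases hml : M i₀.castSucc (Fin.last k) = 0
      · simp [hml]
      · by_cases hmc : M i₀.castSucc (⟨k-1, by omega⟩ : Fin (k+1)) = 0
        · simp [hml, hmc, hcast, hLv, f3_10, fin2_max_zero_left]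
        · simp only [hcast]
          rw [fin2_eq_one _ hmc, fin2_eq_one _ hml]
          simp [f3_20, hLv, sup_idem]
  · have hieq : i = Fin.last k := Fin.ext (by simp only [Fin.val_last]; have := i.isLt; omega)
    rw [hieq, Emat_row_last]
    by_cases hjk : j.val < k
    · rw [if_pos hjk]
      exact (htri' _ _ (show j < Fin.last k from hjk)).symm
    · rw [if_neg hjk]
      have hjl : j = Fin.last k := Fin.ext (by simp only [Fin.val_last]; have := j.isLt; omega)
      rw [hjl]
      obtain ⟨j₀, h0⟩ := hrow (Fin.last k)
      have hj0 : j₀ = Fin.last k := by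
        by_contra hne
        have : j₀ < Fin.last k := Fin.lt_last_iff_ne_last.mpr hne
        exact ((ncoe_ne M _ _).mp h0) (htri' _ _ this)
      rw [hj0] at h0
      exact (fin2_eq_one _ ((ncoe_ne M _ _).mp h0)).symm



variable {k : ℕ}

lemma le_of_nonzero {n : ℕ} (M : Fin n → Fin n → Fin 2)
    (htri : ∀ a b : Fin n, b < a → ncoe M a b = 0) {i j : Fin n} (h : M i j ≠ 0) :
    i.val ≤ j.val := by
  by_contra hlt
  exact h ((ncoe_eq_zero M i j).mp (htri i j (by omega)))

lemma Emat_fishburn (N : Fin k → Fin k → Fin 2) (g : Fin k → Fin 3)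
    (hF : IsFishburn (ncoe N)) (hStd : Std N g) (hNAY : NAY N g) :
    IsFishburn (ncoe (Emat N g)) := by
  obtain ⟨htri, hrow, hcol⟩ := hF
  refine ⟨?_, ?_, ?_⟩
  · intro i j hij
    rw [ncoe_eq_zero]
    by_cases hi : i.val < k
    · have hj : j.val < k := by have := Fin.lt_def.mp hij; omega
      have hieq : i = (⟨i.val, hi⟩ : Fin k).castSucc := Fin.ext rfl
      have hjeq : j = (⟨j.val, hj⟩ : Fin k).castSucc := Fin.ext rfl
      rw [hieq, hjeq, Emat_lo]
      have hN : N ⟨i.val, hi⟩ ⟨j.val, hj⟩ = 0 := by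
        rw [← ncoe_eq_zero]
        exact htri _ _ (by exact Fin.lt_def.mp hij)
      split_ifs <;> simp [hN]
    · have hieq : i = Fin.last k := Fin.ext (by simp only [Fin.val_last]; have := i.isLt; omega)
      rw [hieq, Emat_row_last, if_pos]
      have := Fin.lt_def.mp hij
      have := i.isLt
      omega
  · intro i
    by_cases hi : i.val < k
    · have hk : 0 < k := by omega
      have hieq : i = (⟨i.val, hi⟩ : Fin k).castSucc := Fin.ext rfl
      set i₀ : Fin k := ⟨i.val, hi⟩
      obtain ⟨j₀, hj₀⟩ := hrow i₀
      rw [ncoe_ne] at hj₀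
      by_cases hj1 : j₀.val = k - 1
      · have hj0L : j₀ = Lst k hk := Fin.ext hj1
        by_cases hg : g i₀ = 1
        · refine ⟨Fin.last k, ?_⟩
          rw [ncoe_ne, hieq, Emat_hi _ _ _ hk, if_neg (by simp [hg, f3_10])]
          rw [hj0L] at hj₀; exact hj₀
        · refine ⟨j₀.castSucc, ?_⟩
          rw [ncoe_ne, hieq, Emat_lo, if_neg (by tauto)]
          exact hj₀
      · refine ⟨j₀.castSucc, ?_⟩
        rw [ncoe_ne, hieq, Emat_lo, if_neg (by tauto)]
        exact hj₀
    · refine ⟨Fin.last k, ?_⟩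
      have hieq : i = Fin.last k := Fin.ext (by simp only [Fin.val_last]; have := i.isLt; omega)
      rw [ncoe_ne, hieq, Emat_row_last, if_neg (by simp)]
      exact one_ne_zero
  · intro j
    by_cases hj : j.val < k
    · by_cases hj1 : j.val = k - 1
      · obtain ⟨i₀, j₀, hjv, hN, hg⟩ := hNAY
        have hjeq : j = j₀.castSucc := Fin.ext (by simp [hj1, hjv])
        refine ⟨i₀.castSucc, ?_⟩
        rw [ncoe_ne, hjeq, Emat_lo, if_neg (by tauto)]
        exact hN
      · obtain ⟨i₀, hi₀⟩ := hcol ⟨j.val, hj⟩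
        rw [ncoe_ne] at hi₀
        have hjeq : j = (⟨j.val, hj⟩ : Fin k).castSucc := Fin.ext rfl
        refine ⟨i₀.castSucc, ?_⟩
        rw [ncoe_ne, hjeq, Emat_lo, if_neg (by tauto)]
        exact hi₀
    · have hjeq : j = Fin.last k := Fin.ext (by simp only [Fin.val_last]; have := j.isLt; omega)
      refine ⟨Fin.last k, ?_⟩
      rw [ncoe_ne, hjeq, Emat_row_last, if_neg (by simp)]
      exact one_ne_zero

lemma Dmat_fishburn (M : Fin (k+1) → Fin (k+1) → Fin 2) (hF : IsFishburn (ncoe M)) :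
    IsFishburn (ncoe (Dmat M)) := by
  obtain ⟨htri, hrow, hcol⟩ := hF
  have htri2 : ∀ a b : Fin (k+1), b < a → M a b = 0 := fun a b h =>
    (ncoe_eq_zero M a b).mp (htri a b h)
  refine ⟨?_, ?_, ?_⟩
  · intro i j hij
    rw [ncoe_eq_zero, Dmat]
    have hlt := Fin.lt_def.mp hij
    rw [if_neg (by have := i.isLt; omega)]
    exact htri2 _ _ (by rw [Fin.lt_def]; exact hlt)
  · intro i
    have hk : 0 < k := i.pos
    obtain ⟨j, hj⟩ := hrow i.castSucc
    rw [ncoe_ne] at hj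
    by_cases hjk : j.val < k
    · refine ⟨⟨j.val, hjk⟩, ?_⟩
      rw [ncoe_ne, Dmat]
      have hcs : (⟨j.val, hjk⟩ : Fin k).castSucc = j := Fin.ext rfl
      by_cases hj1 : j.val = k - 1
      · rw [if_pos hj1, hcs]
        intro hmax
        exact hj ((fin2_max _ _).mp hmax).1
      · rw [if_neg hj1, hcs]; exact hj
    · have hjeq : j = Fin.last k := Fin.ext (by simp only [Fin.val_last]; have := j.isLt; omega)
      refine ⟨Lst k hk, ?_⟩
      rw [ncoe_ne, Dmat, if_pos (show (Lst k hk).val = k - 1 from rfl)]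
      intro hmax
      rw [hjeq] at hj
      exact hj ((fin2_max _ _).mp hmax).2
  · intro j
    by_cases hj1 : j.val = k - 1
    · obtain ⟨i', hi'⟩ := hcol ⟨k - 1, by omega⟩
      rw [ncoe_ne] at hi'
      have hle := le_of_nonzero M htri hi'
      have hik : i'.val < k := by
        have hp := j.pos
        have hle' : i'.val ≤ k - 1 := hle
        omega
      refine ⟨⟨i'.val, hik⟩, ?_⟩
      rw [ncoe_ne, Dmat, if_pos hj1]
      have hcs : (⟨i'.val, hik⟩ : Fin k).castSucc = i' := Fin.ext rfl
      have hcs2 : (j.castSucc : Fin (k+1)) = ⟨k - 1, by omega⟩ := Fin.ext hj1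
      rw [hcs, hcs2]
      intro hmax
      exact hi' ((fin2_max _ _).mp hmax).1
    · obtain ⟨i', hi'⟩ := hcol j.castSucc
      rw [ncoe_ne] at hi'
      have hle := le_of_nonzero M htri hi'
      have hik : i'.val < k := by
        have hle' : i'.val ≤ j.val := hle
        have := j.isLt
        omega
      refine ⟨⟨i'.val, hik⟩, ?_⟩
      rw [ncoe_ne, Dmat, if_neg hj1]
      have hcs : (⟨i'.val, hik⟩ : Fin k).castSucc = i' := Fin.ext rfl
      rw [hcs]; exact hi'

lemma Dch_std (M : Fin (k+1) → Fin (k+1) → Fin 2) : Std (Dmat M) (Dch M) := by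
  intro i j hj hN
  rw [Dmat, if_pos hj] at hN
  have := (fin2_max _ _).mp hN
  rw [Dch, if_pos this.2]

lemma D_nay (hk : 0 < k) (M : Fin (k+1) → Fin (k+1) → Fin 2) (hF : IsFishburn (ncoe M)) :
    NAY (Dmat M) (Dch M) := by
  obtain ⟨htri, hrow, hcol⟩ := hF
  obtain ⟨i', hi'⟩ := hcol ⟨k - 1, by omega⟩
  rw [ncoe_ne] at hi'
  have hle := le_of_nonzero M htri hi'
  have hik : i'.val < k := by
    have hle' : i'.val ≤ k - 1 := hle
    omega
  refine ⟨⟨i'.val, hik⟩, Lst k hk, rfl, ?_, ?_⟩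
  · rw [Dmat, if_pos (show (Lst k hk).val = k - 1 from rfl)]
    have hcs : ((⟨i'.val, hik⟩ : Fin k)).castSucc = i' := Fin.ext rfl
    have hcs2 : ((Lst k hk).castSucc : Fin (k+1)) = ⟨k - 1, by omega⟩ := rfl
    rw [hcs, hcs2]
    intro hmax
    exact hi' ((fin2_max _ _).mp hmax).1
  · rw [Dch]
    have hcs : ((⟨i'.val, hik⟩ : Fin k)).castSucc = i' := Fin.ext rfl
    rw [hcs]
    by_cases h1 : M i' (Fin.last k) = 0
    · rw [if_pos h1]; decide
    · rw [if_neg h1, if_neg hi']; decide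



variable {k : ℕ}

lemma valfin : ∀ v : Fin 2, (v : ℕ) = if v = 0 then 0 else 1 := by decide

noncomputable def Sset (hk : 0 < k) (N : Fin k → Fin k → Fin 2) : Finset (Fin k) :=
  univ.filter (fun i => N i (Lst k hk) ≠ 0)

lemma mem_Sset {hk : 0 < k} {N : Fin k → Fin k → Fin 2} {i : Fin k} :
    i ∈ Sset hk N ↔ N i (Lst k hk) ≠ 0 := by simp [Sset]

lemma Sset_nonempty (hk : 0 < k) (N : Fin k → Fin k → Fin 2)
    (hF : IsFishburn (ncoe N)) : (Sset hk N).Nonempty :=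
  ⟨Lst k hk, mem_Sset.mpr (corner_ne hk N hF)⟩

noncomputable def r0 (hk : 0 < k) (N : Fin k → Fin k → Fin 2) : Fin k :=
  if h : (Sset hk N).Nonempty then (Sset hk N).min' h else Lst k hk

lemma r0_mem (hk : 0 < k) (N : Fin k → Fin k → Fin 2) (hF : IsFishburn (ncoe N)) :
    r0 hk N ∈ Sset hk N := by
  rw [r0, dif_pos (Sset_nonempty hk N hF)]
  exact Finset.min'_mem _ _

lemma r0_min (hk : 0 < k) (N : Fin k → Fin k → Fin 2) {i : Fin k}
    (hi : i ∈ Sset hk N) : r0 hk N ≤ i := by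
  rw [r0, dif_pos ⟨i, hi⟩]
  exact Finset.min'_le _ _ hi

lemma sum_split (f : Fin (k+1) → Fin (k+1) → ℕ) :
    ∑ i, ∑ j, f i j = ((∑ i : Fin k, ∑ j : Fin k, f i.castSucc j.castSucc)
      + (∑ i : Fin k, f i.castSucc (Fin.last k))) + (∑ j : Fin (k+1), f (Fin.last k) j) := by
  rw [Fin.sum_univ_castSucc]
  congr 1
  rw [← Finset.sum_add_distrib]
  apply Finset.sum_congr rfl
  intro i _
  rw [Fin.sum_univ_castSucc]

lemma prevCol_Emat (hk : 0 < k) (N : Fin k → Fin k → Fin 2) (g : Fin k → Fin 3) :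
    prevColWeight (ncoe (Emat N g)) =
      prevColWeight (ncoe N) + ((Sset hk N).filter (fun i => g i ≠ 1)).card := by
  have e1 : prevColWeight (ncoe (Emat N g)) =
      ∑ i : Fin (k+1), ∑ j : Fin (k+1), (if j.val < k then ncoe (Emat N g) i j else 0) := by
    rw [prevColWeight, Fintype.sum_prod_type]
    apply Finset.sum_congr rfl; intro i _
    apply Finset.sum_congr rfl; intro j _
    rfl
  rw [e1, sum_split]
  have hB : (∑ i : Fin k,
      if (Fin.last k).val < k then ncoe (Emat N g) i.castSucc (Fin.last k) else 0) = 0 := by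
    simp
  have hC : (∑ j : Fin (k+1), if j.val < k then ncoe (Emat N g) (Fin.last k) j else 0) = 0 := by
    apply Finset.sum_eq_zero; intro j _
    by_cases h : j.val < k
    · simp [ncoe, Emat_row_last, h]
    · simp [h]
  rw [hB, hC, add_zero, add_zero]
  have hA : ∀ i : Fin k, ∀ j : Fin k,
      (if (j.castSucc : Fin (k+1)).val < k then ncoe (Emat N g) i.castSucc j.castSucc else 0)
      = (if j.val < k - 1 then ncoe N i j else 0)
        + (if j = Lst k hk ∧ (N i (Lst k hk) ≠ 0 ∧ g i ≠ 1) then 1 else 0) := by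
    intro i j
    rw [if_pos (show (j.castSucc : Fin (k+1)).val < k from j.isLt)]
    have hvv : ncoe (Emat N g) i.castSucc j.castSucc
        = ((if j.val = k - 1 ∧ g i = 1 then 0 else N i j : Fin 2) : ℕ) := by
      simp only [ncoe, Emat_lo]
    rw [hvv]
    have hLv : (Lst k hk).val = k - 1 := rfl
    by_cases hj1 : j.val = k - 1
    · have hjL : j = Lst k hk := Fin.ext hj1
      rw [hjL, hLv]
      rw [if_neg (lt_irrefl (k-1)), zero_add]
      by_cases hg : g i = 1
      · simp [hg]
      · simp [hg, valfin (N i (Lst k hk))]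
    · have hne : j ≠ Lst k hk := fun h => hj1 (by rw [h]; exact hLv)
      rw [if_neg (fun hc : j.val = k - 1 ∧ g i = 1 => hj1 hc.1)]
      rw [if_neg (fun hc : j = Lst k hk ∧ _ => hne hc.1), add_zero]
      have hjlt : j.val < k - 1 := by have := j.isLt; omega
      rw [if_pos hjlt]
      rfl
  calc ∑ i : Fin k, ∑ j : Fin k,
        (if (j.castSucc : Fin (k+1)).val < k then ncoe (Emat N g) i.castSucc j.castSucc else 0)
      = ∑ i : Fin k, ∑ j : Fin k, ((if j.val < k - 1 then ncoe N i j else 0)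
        + (if j = Lst k hk ∧ (N i (Lst k hk) ≠ 0 ∧ g i ≠ 1) then 1 else 0)) := by
        apply Finset.sum_congr rfl; intro i _
        apply Finset.sum_congr rfl; intro j _
        exact hA i j
    _ = (∑ i : Fin k, ∑ j : Fin k, if j.val < k - 1 then ncoe N i j else 0)
        + ∑ i : Fin k, ∑ j : Fin k,
            (if j = Lst k hk ∧ (N i (Lst k hk) ≠ 0 ∧ g i ≠ 1) then 1 else 0) := by
        rw [← Finset.sum_add_distrib]
        apply Finset.sum_congr rfl; intro i _
        rw [← Finset.sum_add_distrib]
    _ = prevColWeight (ncoe N) + ((Sset hk N).filter (fun i => g i ≠ 1)).card := by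
        congr 1
        · rw [prevColWeight, Fintype.sum_prod_type]
        · rw [Sset, Finset.filter_filter, Finset.card_filter]
          apply Finset.sum_congr rfl; intro i _
          simp [ite_and, Finset.sum_ite_eq']



variable {k : ℕ}

lemma lastCol_N (hk : 0 < k) (N : Fin k → Fin k → Fin 2) :
    lastColWeight (ncoe N) = (Sset hk N).card := by
  rw [lastColWeight, Fintype.sum_prod_type, Sset, Finset.card_filter]
  apply Finset.sum_congr rfl; intro i _
  have h1 : ∀ j : Fin k, (if j.val = k - 1 then ncoe N i j else 0)
      = if j = Lst k hk then ncoe N i j else 0 := by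
    intro j
    congr 1
    simp only [eq_iff_iff]
    constructor
    · intro h; exact Fin.ext h
    · intro h; rw [h]; rfl
  rw [Finset.sum_congr rfl (fun j _ => h1 j), Finset.sum_ite_eq' univ (Lst k hk)]
  simp [valfin (N i (Lst k hk)), ncoe]

lemma lastCol_Emat (hk : 0 < k) (N : Fin k → Fin k → Fin 2) (g : Fin k → Fin 3) :
    lastColWeight (ncoe (Emat N g)) = 1 + ((Sset hk N).filter (fun i => g i ≠ 0)).card := by
  have e1 : lastColWeight (ncoe (Emat N g)) =
      ∑ i : Fin (k+1), ∑ j : Fin (k+1), (if j.val = k then ncoe (Emat N g) i j else 0) := by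
    rw [lastColWeight, Fintype.sum_prod_type]
    apply Finset.sum_congr rfl; intro i _
    apply Finset.sum_congr rfl; intro j _
    rfl
  rw [e1, sum_split]
  have hA : (∑ i : Fin k, ∑ j : Fin k,
      if (j.castSucc : Fin (k+1)).val = k then ncoe (Emat N g) i.castSucc j.castSucc else 0) = 0 := by
    apply Finset.sum_eq_zero; intro i _
    apply Finset.sum_eq_zero; intro j _
    rw [if_neg]
    simp only [Fin.coe_castSucc]
    have := j.isLt
    omega
  have hB : (∑ i : Fin k,
      if (Fin.last k).val = k then ncoe (Emat N g) i.castSucc (Fin.last k) else 0)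
      = ((Sset hk N).filter (fun i => g i ≠ 0)).card := by
    rw [Sset, Finset.filter_filter, Finset.card_filter]
    apply Finset.sum_congr rfl; intro i _
    rw [if_pos (Fin.val_last k)]
    have hv : ncoe (Emat N g) i.castSucc (Fin.last k)
        = ((if g i = 0 then 0 else N i (Lst k hk) : Fin 2) : ℕ) := by
      simp only [ncoe, Emat_hi N g i hk]
    rw [hv]
    by_cases hg : g i = 0
    · simp [hg]
    · simp [hg, valfin (N i (Lst k hk))]
  have hC : (∑ j : Fin (k+1), if j.val = k then ncoe (Emat N g) (Fin.last k) j else 0) = 1 := by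
    have h1 : ∀ j : Fin (k+1), (if j.val = k then ncoe (Emat N g) (Fin.last k) j else 0)
        = if j = Fin.last k then 1 else 0 := by
      intro j
      by_cases h : j = Fin.last k
      · rw [if_pos h, h, if_pos (Fin.val_last k)]
        simp [ncoe, Emat_row_last]
      · rw [if_neg h, if_neg]
        intro hv
        exact h (Fin.ext (by rw [hv, Fin.val_last]))
    rw [Finset.sum_congr rfl (fun j _ => h1 j), Finset.sum_ite_eq' univ (Fin.last k)]
    simp
  rw [hA, hB, hC, zero_add, add_comm]



variable {k : ℕ}

lemma wNE_card {m : ℕ} (M : Fin m → Fin m → ℕ) :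
    wNEcount M = (univ.filter (IsWNECell M)).card := by
  rw [wNEcount, Nat.card_eq_fintype_card]
  convert Fintype.card_subtype _ using 2

lemma wNE_N_last (hk : 0 < k) (N : Fin k → Fin k → Fin 2) (hF : IsFishburn (ncoe N))
    (i : Fin k) : IsWNECell (ncoe N) (i, Lst k hk) ↔ i = r0 hk N := by
  have hLv : (Lst k hk).val = k - 1 := rfl
  constructor
  · rintro ⟨⟨-, hnz⟩, hblock⟩
    have hiS : i ∈ Sset hk N := mem_Sset.mpr ((ncoe_ne N _ _).mp hnz)
    have h1 : r0 hk N ≤ i := r0_min hk N hiS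
    rcases eq_or_lt_of_le h1 with h | h
    · exact h.symm
    · exfalso
      have hr0 := r0_mem hk N hF
      refine hblock (r0 hk N, Lst k hk) ?_ ?_ ?_
      · exact ⟨by simp only [Fin.le_def, hLv]; have := (r0 hk N).isLt; omega,
          (ncoe_ne N _ _).mpr (mem_Sset.mp hr0)⟩
      · intro hc
        rw [Prod.ext_iff] at hc
        exact (ne_of_lt h) hc.1
      · refine ⟨?_, le_of_lt h, le_refl _⟩
        intro hc
        rw [Prod.ext_iff] at hc
        exact (ne_of_lt h) hc.1.symm
  · rintro rfl
    have hr0 := r0_mem hk N hF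
    refine ⟨⟨?_, (ncoe_ne N _ _).mpr (mem_Sset.mp hr0)⟩, ?_⟩
    · simp only [Fin.le_def, hLv]; have := (r0 hk N).isLt; omega
    · rintro ⟨a, b⟩ ⟨hab, hnz⟩ hne ⟨-, h1, h2⟩
      simp only at h1 h2
      have hbL : b = Lst k hk := by
        apply Fin.ext
        have hb := b.isLt
        have := Fin.le_def.mp h2
        omega
      subst hbL
      have haS : a ∈ Sset hk N := mem_Sset.mpr ((ncoe_ne N _ _).mp hnz)
      have := r0_min hk N haS
      have : a = r0 hk N := le_antisymm h1 this
      exact hne (by rw [this])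

lemma count_N (hk : 0 < k) (N : Fin k → Fin k → Fin 2) (hF : IsFishburn (ncoe N)) :
    (univ.filter (IsWNECell (ncoe N))).card
    = (univ.filter (fun c : Cell k => IsWNECell (ncoe N) c ∧ c.2.val < k - 1)).card + 1 := by
  have hsplit := Finset.card_filter_add_card_filter_not
    (s := (univ : Finset (Cell k)).filter (IsWNECell (ncoe N)))
    (p := fun c => c.2.val < k - 1)
  rw [Finset.filter_filter, Finset.filter_filter] at hsplit
  have h2 : ((univ : Finset (Cell k)).filter
      (fun c => IsWNECell (ncoe N) c ∧ ¬ c.2.val < k - 1)) = {(r0 hk N, Lst k hk)} := by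
    ext c
    obtain ⟨a, b⟩ := c
    simp only [Finset.mem_filter, Finset.mem_univ, true_and, Finset.mem_singleton]
    constructor
    · rintro ⟨hP, hc2⟩
      have hbL : b = Lst k hk := Fin.ext (by
        have := b.isLt
        have hLv : (Lst k hk).val = k - 1 := rfl
        rw [hLv]
        omega)
      subst hbL
      rw [wNE_N_last hk N hF] at hP
      rw [hP]
    · rintro hc
      rw [Prod.ext_iff] at hc
      obtain ⟨h1, h2'⟩ := hc
      simp only at h1 h2'
      subst h1; subst h2'
      refine ⟨(wNE_N_last hk N hF _).mpr rfl, ?_⟩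
      simp only [not_lt]
      exact le_refl _
  rw [h2, Finset.card_singleton] at hsplit
  omega



variable {k : ℕ}

lemma Emat_last_cs (N : Fin k → Fin k → Fin 2) (g : Fin k → Fin 3) (i : Fin k) (hk : 0 < k) :
    Emat N g i.castSucc (Fin.last k) ≠ 0 ↔ (g i ≠ 0 ∧ N i (Lst k hk) ≠ 0) := by
  rw [Emat_hi N g i hk]
  by_cases hg : g i = 0 <;> simp [hg]

lemma Emat_mid_cs (N : Fin k → Fin k → Fin 2) (g : Fin k → Fin 3) (i : Fin k) (hk : 0 < k) :
    Emat N g i.castSucc (Lst k hk).castSucc ≠ 0 ↔ (g i ≠ 1 ∧ N i (Lst k hk) ≠ 0) := by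
  rw [Emat_lo]
  have hLv : ((Lst k hk) : Fin k).val = k - 1 := rfl
  by_cases hg : g i = 1 <;> simp [hg, hLv]

noncomputable def TS (N : Fin k → Fin k → Fin 2) (g : Fin k → Fin 3) : Finset (Fin (k+1)) :=
  univ.filter (fun r => Emat N g r (Fin.last k) ≠ 0)

lemma TS_last_mem (N : Fin k → Fin k → Fin 2) (g : Fin k → Fin 3) :
    Fin.last k ∈ TS N g := by
  simp [TS, Emat_row_last]

noncomputable def t1 (N : Fin k → Fin k → Fin 2) (g : Fin k → Fin 3) : Fin (k+1) :=
  (TS N g).min' ⟨_, TS_last_mem N g⟩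

lemma t1_mem (N : Fin k → Fin k → Fin 2) (g : Fin k → Fin 3) :
    Emat N g (t1 N g) (Fin.last k) ≠ 0 := by
  have := Finset.min'_mem (TS N g) ⟨_, TS_last_mem N g⟩
  exact (Finset.mem_filter.mp this).2

lemma t1_min (N : Fin k → Fin k → Fin 2) (g : Fin k → Fin 3) {r : Fin (k+1)}
    (h : Emat N g r (Fin.last k) ≠ 0) : t1 N g ≤ r :=
  Finset.min'_le _ _ (by simpa [TS] using h)

lemma wNE_E_last (N : Fin k → Fin k → Fin 2) (g : Fin k → Fin 3) (a : Fin (k+1)) :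
    IsWNECell (ncoe (Emat N g)) (a, Fin.last k) ↔ a = t1 N g := by
  constructor
  · rintro ⟨⟨-, hnz⟩, hblock⟩
    rw [ncoe_ne] at hnz
    have hmin := t1_min N g hnz
    rcases eq_or_lt_of_le hmin with h | h
    · exact h.symm
    · exfalso
      refine hblock (t1 N g, Fin.last k) ⟨Fin.le_last _, (ncoe_ne _ _ _).mpr (t1_mem N g)⟩ ?_ ?_
      · intro hc
        rw [Prod.ext_iff] at hc
        exact (ne_of_lt h) hc.1
      · refine ⟨?_, le_of_lt h, le_refl _⟩
        intro hc
        rw [Prod.ext_iff] at hc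
        exact (ne_of_lt h) hc.1.symm
  · rintro rfl
    refine ⟨⟨Fin.le_last _, (ncoe_ne _ _ _).mpr (t1_mem N g)⟩, ?_⟩
    rintro ⟨b1, b2⟩ ⟨-, hnz⟩ hne ⟨-, h1, h2⟩
    simp only at h1 h2
    have hb2 : b2 = Fin.last k := le_antisymm (Fin.le_last _) h2
    subst hb2
    rw [ncoe_ne] at hnz
    have := t1_min N g hnz
    have hb1 : b1 = t1 N g := le_antisymm h1 this
    exact hne (by rw [hb1])

lemma wNE_E_mid (hk : 0 < k) (N : Fin k → Fin k → Fin 2) (g : Fin k → Fin 3)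
    (hF : IsFishburn (ncoe N)) (a : Fin (k+1)) :
    IsWNECell (ncoe (Emat N g)) (a, (Lst k hk).castSucc) ↔
      (g (r0 hk N) = 0 ∧ a = (r0 hk N).castSucc) := by
  have hLv : ((Lst k hk) : Fin k).val = k - 1 := rfl
  have hclv : ((Lst k hk).castSucc : Fin (k+1)).val = k - 1 := rfl
  have hNr : N (r0 hk N) (Lst k hk) ≠ 0 := mem_Sset.mp (r0_mem hk N hF)
  have hlastne : (Fin.last k : Fin (k+1)) ≠ (Lst k hk).castSucc := by
    intro hc
    have := congrArg Fin.val hc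
    rw [Fin.val_last, hclv] at this
    omega
  constructor
  · rintro ⟨⟨hle, hnz⟩, hblock⟩
    have hak : a.val < k := by
      have hle2 : a ≤ (Lst k hk).castSucc := hle
      have := Fin.le_def.mp hle2
      rw [hclv] at this
      omega
    set i : Fin k := ⟨a.val, hak⟩ with hidef
    have ha : a = i.castSucc := Fin.ext rfl
    rw [ha, ncoe_ne, Emat_mid_cs N g i hk] at hnz
    obtain ⟨hgi, hNi⟩ := hnz
    have hiS : i ∈ Sset hk N := mem_Sset.mpr hNi
    have hri : r0 hk N ≤ i := r0_min hk N hiS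
    have hieq : i = r0 hk N := by
      by_contra hne2
      have hlt : r0 hk N < i := lt_of_le_of_ne hri (fun h => hne2 h.symm)
      by_cases hg0 : g (r0 hk N) = 0
      · refine hblock ((r0 hk N).castSucc, (Lst k hk).castSucc)
          ⟨?_, (ncoe_ne _ _ _).mpr ((Emat_mid_cs N g _ hk).mpr ⟨by rw [hg0]; decide, hNr⟩)⟩ ?_ ?_
        · rw [Fin.le_def, hclv]
          have := (r0 hk N).isLt
          simp only [Fin.coe_castSucc]
          omega
        · intro hc
          rw [Prod.ext_iff] at hc
          have := congrArg Fin.val hc.1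
          simp only [Fin.coe_castSucc] at this
          rw [ha] at this
          exact (ne_of_lt hlt) (Fin.ext this)
        · refine ⟨?_, ?_, le_refl _⟩
          · intro hc
            rw [Prod.ext_iff] at hc
            have := congrArg Fin.val hc.1
            rw [ha] at this
            simp only [Fin.coe_castSucc] at this
            exact (ne_of_lt hlt) (Fin.ext this.symm)
          · rw [ha, Fin.le_def]
            simp only [Fin.coe_castSucc]
            exact le_of_lt hlt
      · refine hblock ((r0 hk N).castSucc, Fin.last k)
          ⟨Fin.le_last _, (ncoe_ne _ _ _).mpr ((Emat_last_cs N g _ hk).mpr ⟨hg0, hNr⟩)⟩ ?_ ?_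
        · intro hc
          rw [Prod.ext_iff] at hc
          exact hlastne hc.2
        · refine ⟨?_, ?_, Fin.le_last _⟩
          · intro hc
            rw [Prod.ext_iff] at hc
            exact hlastne hc.2.symm
          · rw [ha, Fin.le_def]
            simp only [Fin.coe_castSucc]
            exact le_of_lt hlt
    have hg0 : g (r0 hk N) = 0 := by
      by_contra hg0
      refine hblock ((r0 hk N).castSucc, Fin.last k)
        ⟨Fin.le_last _, (ncoe_ne _ _ _).mpr ((Emat_last_cs N g _ hk).mpr ⟨hg0, hNr⟩)⟩ ?_ ?_
      · intro hc
        rw [Prod.ext_iff] at hc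
        exact hlastne hc.2
      · refine ⟨?_, ?_, Fin.le_last _⟩
        · intro hc
          rw [Prod.ext_iff] at hc
          exact hlastne hc.2.symm
        · rw [ha, ← hieq]
    exact ⟨hg0, by rw [ha, hieq]⟩
  · rintro ⟨hg0, rfl⟩
    refine ⟨⟨?_, (ncoe_ne _ _ _).mpr ((Emat_mid_cs N g _ hk).mpr ⟨by rw [hg0]; decide, hNr⟩)⟩, ?_⟩
    · rw [Fin.le_def, hclv]
      simp only [Fin.coe_castSucc]
      have := (r0 hk N).isLt
      omega
    · rintro ⟨b1, b2⟩ ⟨hble, hnz⟩ hne ⟨-, h1, h2⟩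
      simp only at h1 h2
      have hb2v : b2.val = k - 1 ∨ b2.val = k := by
        have := Fin.le_def.mp h2
        rw [hclv] at this
        have := b2.isLt
        omega
      have hb1k : b1.val < k := by
        have := Fin.le_def.mp h1
        simp only [Fin.coe_castSucc] at this
        have := (r0 hk N).isLt
        omega
      set x : Fin k := ⟨b1.val, hb1k⟩ with hxdef
      have hb1 : b1 = x.castSucc := Fin.ext rfl
      have hxle : x ≤ r0 hk N := by
        rw [Fin.le_def]
        have := Fin.le_def.mp h1
        exact this
      rcases hb2v with hb | hb
      · have hb2 : b2 = (Lst k hk).castSucc := Fin.ext (by rw [hb, hclv])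
        subst hb2
        rw [hb1, ncoe_ne, Emat_mid_cs N g x hk] at hnz
        have hxS : x ∈ Sset hk N := mem_Sset.mpr hnz.2
        have : x = r0 hk N := le_antisymm hxle (r0_min hk N hxS)
        exact hne (by rw [hb1, this])
      · have hb2 : b2 = Fin.last k := Fin.ext (by rw [hb, Fin.val_last])
        subst hb2
        rw [hb1, ncoe_ne, Emat_last_cs N g x hk] at hnz
        have hxS : x ∈ Sset hk N := mem_Sset.mpr hnz.2
        have : x = r0 hk N := le_antisymm hxle (r0_min hk N hxS)
        rw [this] at hnz
        exact hnz.1 hg0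



variable {k : ℕ}

lemma csle {a : Fin (k+1)} {x : Fin k} (h : x.val ≤ a.val) : x.castSucc ≤ a := by
  rw [Fin.le_def]
  simpa using h

lemma pair_ne_of_snd {α β : Type*} {a c : α} {b d : β} (h : b ≠ d) : (a, b) ≠ (c, d) := by
  intro hc
  rw [Prod.ext_iff] at hc
  exact h hc.2

lemma pair_ne_of_fst {α β : Type*} {a c : α} {b d : β} (h : a ≠ c) : (a, b) ≠ (c, d) := by
  intro hc
  rw [Prod.ext_iff] at hc
  exact h hc.1

lemma wNE_E_lo (hk : 0 < k) (N : Fin k → Fin k → Fin 2) (g : Fin k → Fin 3)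
    (a b : Fin (k+1)) (hb : b.val < k - 1) (ha : a.val < k) :
    IsWNECell (ncoe (Emat N g)) (a, b) ↔
      IsWNECell (ncoe N) (⟨a.val, ha⟩, ⟨b.val, by omega⟩) := by
  have hbk : b.val < k := by omega
  set i : Fin k := ⟨a.val, ha⟩ with hidef
  set j : Fin k := ⟨b.val, hbk⟩ with hjdef
  have hai : a = i.castSucc := Fin.ext rfl
  have hbj : b = j.castSucc := Fin.ext rfl
  have hLv : (Lst k hk).val = k - 1 := rfl
  have hclv : ((Lst k hk).castSucc : Fin (k+1)).val = k - 1 := rfl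
  have hlast_ne_b : (Fin.last k : Fin (k+1)) ≠ b := by
    intro hc
    have := congrArg Fin.val hc
    rw [Fin.val_last] at this
    omega
  have hb_ne_last : b ≠ (Fin.last k : Fin (k+1)) := fun h => hlast_ne_b h.symm
  have hcl_ne_b : ((Lst k hk).castSucc : Fin (k+1)) ≠ b := by
    intro hc
    have hv := congrArg Fin.val hc
    rw [hclv] at hv
    omega
  have hb_ne_cl : b ≠ ((Lst k hk).castSucc : Fin (k+1)) := fun h => hcl_ne_b h.symm
  have hvE : ncoe (Emat N g) a b = ncoe N i j := by
    rw [hai, hbj]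
    simp only [ncoe, Emat_lo]
    rw [if_neg]
    rintro ⟨hc, -⟩
    have hc' : b.val = k - 1 := hc
    omega
  constructor
  · rintro ⟨⟨hle, hnz⟩, hblock⟩
    refine ⟨⟨hle, by rw [← hvE]; exact hnz⟩, ?_⟩
    rintro ⟨x, y⟩ ⟨hxy, hnzN⟩ hneN ⟨-, h1, h2⟩
    have h1' : x.val ≤ a.val := Fin.le_def.mp h1
    have h2' : b.val ≤ y.val := Fin.le_def.mp h2
    have hnzN' : N x y ≠ 0 := (ncoe_ne N x y).mp hnzN
    by_cases hy : y.val = k - 1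
    · have hyL : y = Lst k hk := Fin.ext hy
      rw [hyL] at hnzN'
      by_cases hgx : g x = 1
      · refine hblock (x.castSucc, Fin.last k) ⟨Fin.le_last _, ?_⟩
          (pair_ne_of_snd hlast_ne_b) ⟨pair_ne_of_snd hb_ne_last, csle h1', Fin.le_last _⟩
        exact (ncoe_ne _ _ _).mpr ((Emat_last_cs N g x hk).mpr ⟨by rw [hgx]; decide, hnzN'⟩)
      · refine hblock (x.castSucc, (Lst k hk).castSucc) ⟨?_, ?_⟩
          (pair_ne_of_snd hcl_ne_b)
          ⟨pair_ne_of_snd hb_ne_cl, csle h1',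
            show b ≤ ((Lst k hk).castSucc : Fin (k+1)) from
              Fin.le_def.mpr (by rw [hclv]; omega)⟩
        · show (x.castSucc : Fin (k+1)) ≤ (Lst k hk).castSucc
          exact csle (show x.val ≤ ((Lst k hk).castSucc : Fin (k+1)).val by
            rw [hclv]; have := x.isLt; omega)
        · exact (ncoe_ne _ _ _).mpr ((Emat_mid_cs N g x hk).mpr ⟨hgx, hnzN'⟩)
    · have hnecs : (x.castSucc, y.castSucc) ≠ (a, b) := by
        intro hc
        rw [Prod.ext_iff] at hc
        have hc1 := congrArg Fin.val hc.1
        have hc2 := congrArg Fin.val hc.2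
        simp only [Fin.coe_castSucc] at hc1 hc2
        exact hneN (by rw [Prod.ext_iff]; exact ⟨Fin.ext hc1, Fin.ext hc2⟩)
      refine hblock (x.castSucc, y.castSucc) ⟨csle (Fin.le_def.mp hxy), ?_⟩ hnecs
        ⟨fun h => hnecs h.symm, csle h1', Fin.le_def.mpr (by simpa using h2')⟩
      rw [ncoe_ne, Emat_lo, if_neg (fun hc => hy hc.1)]
      exact hnzN'
  · rintro ⟨⟨hle, hnz⟩, hblock⟩
    refine ⟨⟨hle, by rw [hvE]; exact hnz⟩, ?_⟩
    rintro ⟨u, v⟩ ⟨huv, hnzE⟩ hneE ⟨-, h1, h2⟩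
    have h1' : u.val ≤ a.val := Fin.le_def.mp h1
    have h2' : b.val ≤ v.val := Fin.le_def.mp h2
    have hu : u.val < k := by omega
    set x : Fin k := ⟨u.val, hu⟩ with hxdef
    have hux : u = x.castSucc := Fin.ext rfl
    by_cases hv : v.val < k
    · set y : Fin k := ⟨v.val, hv⟩ with hydef
      have hvy : v = y.castSucc := Fin.ext rfl
      have hNxy : N x y ≠ 0 := by
        have h := (ncoe_ne _ _ _).mp hnzE
        rw [hux, hvy, Emat_lo] at h
        by_cases hc : (y : Fin k).val = k - 1 ∧ g x = 1
        · rw [if_pos hc] at h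
          exact absurd rfl h
        · rwa [if_neg hc] at h
      have hnexy : (x, y) ≠ (i, j) := by
        intro hc
        rw [Prod.ext_iff] at hc
        have hc1 := congrArg Fin.val hc.1
        have hc2 := congrArg Fin.val hc.2
        exact hneE (by
          rw [Prod.ext_iff]
          exact ⟨Fin.ext (by simpa using hc1), Fin.ext (by simpa using hc2)⟩)
      exact hblock (x, y) ⟨Fin.le_def.mpr (Fin.le_def.mp huv), (ncoe_ne N x y).mpr hNxy⟩
        hnexy ⟨fun h => hnexy h.symm, Fin.le_def.mpr h1', Fin.le_def.mpr h2'⟩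
    · have hvl : v = Fin.last k := Fin.ext (by rw [Fin.val_last]; have := v.isLt; omega)
      have hNx : g x ≠ 0 ∧ N x (Lst k hk) ≠ 0 := by
        have h := (ncoe_ne _ _ _).mp hnzE
        rw [hux, hvl] at h
        exact (Emat_last_cs N g x hk).mp h
      have hLne : (Lst k hk : Fin k) ≠ j := by
        intro hc
        have := congrArg Fin.val hc
        rw [hLv] at this
        have hjb : (j : Fin k).val = b.val := rfl
        omega
      have hjv : (j : Fin k).val = b.val := rfl
      exact hblock (x, Lst k hk)
        ⟨show x ≤ Lst k hk from Fin.le_def.mpr (by rw [hLv]; have := x.isLt; omega),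
          (ncoe_ne _ _ _).mpr hNx.2⟩
        (pair_ne_of_snd hLne)
        ⟨pair_ne_of_snd (fun h => hLne h.symm), Fin.le_def.mpr h1',
          show j ≤ Lst k hk from Fin.le_def.mpr (by rw [hLv, hjv]; omega)⟩



variable {k : ℕ}

lemma count_E (hk : 0 < k) (N : Fin k → Fin k → Fin 2) (g : Fin k → Fin 3)
    (hF : IsFishburn (ncoe N)) :
    ((univ : Finset (Cell (k+1))).filter (IsWNECell (ncoe (Emat N g)))).card
    = ((univ : Finset (Cell k)).filter
        (fun c => IsWNECell (ncoe N) c ∧ c.2.val < k - 1)).card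
      + (if g (r0 hk N) = 0 then 2 else 1) := by
  have hsplit := Finset.card_filter_add_card_filter_not
    (s := (univ : Finset (Cell (k+1))).filter (IsWNECell (ncoe (Emat N g))))
    (p := fun c => c.2.val < k - 1)
  rw [Finset.filter_filter, Finset.filter_filter] at hsplit
  have hP2 : ∀ c : Cell (k+1), c ∈ (univ : Finset (Cell (k+1))).filter
      (fun c => IsWNECell (ncoe (Emat N g)) c ∧ c.2.val < k - 1) → c.2.val < k - 1 :=
    fun c hc => (Finset.mem_filter.mp hc).2.2
  have hP1 : ∀ c : Cell (k+1), c ∈ (univ : Finset (Cell (k+1))).filter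
      (fun c => IsWNECell (ncoe (Emat N g)) c ∧ c.2.val < k - 1) → c.1.val < k := by
    intro c hc
    have h := (Finset.mem_filter.mp hc).2
    have hle := Fin.le_def.mp h.1.1.1
    have := h.2
    omega
  have hlow : ((univ : Finset (Cell (k+1))).filter
      (fun c => IsWNECell (ncoe (Emat N g)) c ∧ c.2.val < k - 1)).card
      = ((univ : Finset (Cell k)).filter
          (fun c => IsWNECell (ncoe N) c ∧ c.2.val < k - 1)).card := by
    refine Finset.card_bij
      (fun c hc => ((⟨c.1.val, hP1 c hc⟩, ⟨c.2.val, by have := hP2 c hc; omega⟩) : Cell k))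
      ?_ ?_ ?_
    · intro c hc
      obtain ⟨hw, hlt⟩ := (Finset.mem_filter.mp hc).2
      rw [Finset.mem_filter]
      exact ⟨Finset.mem_univ _,
        (wNE_E_lo hk N g c.1 c.2 hlt (hP1 c hc)).mp hw, hlt⟩
    · intro a ha b hb heq
      rw [Prod.ext_iff] at heq
      have h1 := congrArg Fin.val heq.1
      have h2 := congrArg Fin.val heq.2
      rw [Prod.ext_iff]
      exact ⟨Fin.ext h1, Fin.ext h2⟩
    · intro b hb
      obtain ⟨hw, hlt⟩ := (Finset.mem_filter.mp hb).2
      have hlt' : (b.2.castSucc : Fin (k+1)).val < k - 1 := hlt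
      refine ⟨(b.1.castSucc, b.2.castSucc), ?_, ?_⟩
      · rw [Finset.mem_filter]
        refine ⟨Finset.mem_univ _, ?_, hlt'⟩
        exact (wNE_E_lo hk N g b.1.castSucc b.2.castSucc hlt' b.1.isLt).mpr hw
      · rw [Prod.ext_iff]
        exact ⟨Fin.ext rfl, Fin.ext rfl⟩
  have hclv : ((Lst k hk).castSucc : Fin (k+1)).val = k - 1 := rfl
  have hcl_ne_last : ((Lst k hk).castSucc : Fin (k+1)) ≠ Fin.last k := by
    intro hc
    have := congrArg Fin.val hc
    rw [hclv, Fin.val_last] at this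
    omega
  have hhigh : ((univ : Finset (Cell (k+1))).filter
      (fun c => IsWNECell (ncoe (Emat N g)) c ∧ ¬ c.2.val < k - 1)).card
      = (if g (r0 hk N) = 0 then 2 else 1) := by
    by_cases hg0 : g (r0 hk N) = 0
    · rw [if_pos hg0]
      have hset : ((univ : Finset (Cell (k+1))).filter
          (fun c => IsWNECell (ncoe (Emat N g)) c ∧ ¬ c.2.val < k - 1))
          = {((r0 hk N).castSucc, (Lst k hk).castSucc), (t1 N g, Fin.last k)} := by
        ext ⟨a, b⟩
        simp only [Finset.mem_filter, Finset.mem_univ, true_and, Finset.mem_insert,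
          Finset.mem_singleton, Prod.mk.injEq]
        constructor
        · rintro ⟨hw, hbge⟩
          have hbv : b.val = k - 1 ∨ b.val = k := by have := b.isLt; omega
          rcases hbv with h | h
          · left
            have hbeq : b = (Lst k hk).castSucc := Fin.ext (by rw [h, hclv])
            rw [hbeq] at hw
            have := (wNE_E_mid hk N g hF a).mp hw
            exact ⟨this.2, hbeq⟩
          · right
            have hbeq : b = Fin.last k := Fin.ext (by rw [h, Fin.val_last])
            rw [hbeq] at hw
            exact ⟨(wNE_E_last N g a).mp hw, hbeq⟩
        · rintro (⟨ha, hb⟩ | ⟨ha, hb⟩)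
          · subst ha; subst hb
            refine ⟨(wNE_E_mid hk N g hF _).mpr ⟨hg0, rfl⟩, ?_⟩
            rw [hclv]
            omega
          · subst ha; subst hb
            refine ⟨(wNE_E_last N g _).mpr rfl, ?_⟩
            rw [Fin.val_last]
            omega
      rw [hset, Finset.card_insert_of_notMem, Finset.card_singleton]
      rw [Finset.mem_singleton]
      exact pair_ne_of_snd hcl_ne_last
    · rw [if_neg hg0]
      have hset : ((univ : Finset (Cell (k+1))).filter
          (fun c => IsWNECell (ncoe (Emat N g)) c ∧ ¬ c.2.val < k - 1))
          = {(t1 N g, Fin.last k)} := by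
        ext ⟨a, b⟩
        simp only [Finset.mem_filter, Finset.mem_univ, true_and,
          Finset.mem_singleton, Prod.mk.injEq]
        constructor
        · rintro ⟨hw, hbge⟩
          have hbv : b.val = k - 1 ∨ b.val = k := by have := b.isLt; omega
          rcases hbv with h | h
          · exfalso
            have hbeq : b = (Lst k hk).castSucc := Fin.ext (by rw [h, hclv])
            rw [hbeq] at hw
            exact hg0 ((wNE_E_mid hk N g hF a).mp hw).1
          · have hbeq : b = Fin.last k := Fin.ext (by rw [h, Fin.val_last])
            rw [hbeq] at hw
            exact ⟨(wNE_E_last N g a).mp hw, hbeq⟩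
        · rintro ⟨ha, hb⟩
          subst ha; subst hb
          refine ⟨(wNE_E_last N g _).mpr rfl, ?_⟩
          rw [Fin.val_last]
          omega
      rw [hset, Finset.card_singleton]
  rw [← hsplit, hlow, hhigh]

lemma wNE_Emat (hk : 0 < k) (N : Fin k → Fin k → Fin 2) (g : Fin k → Fin 3)
    (hF : IsFishburn (ncoe N)) :
    wNEcount (ncoe (Emat N g)) = wNEcount (ncoe N)
      + (if g (r0 hk N) = 0 then 1 else 0) := by
  rw [wNE_card, wNE_card, count_E hk N g hF, count_N hk N hF]
  split_ifs <;> omega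



variable {k : ℕ}

noncomputable def mono {n : ℕ} (M : Fin n → Fin n → Fin 2) : MvPolynomial (Fin 3) ℤ :=
  X 0 ^ prevColWeight (ncoe M) * X 1 ^ (lastColWeight (ncoe M) - 1) * X 2 ^ wNEcount (ncoe M)

lemma Pk_eq (n : ℕ) :
    Pk n = ∑ M : Fin n → Fin n → Fin 2, if IsFishburn (ncoe M) then mono M else 0 := rfl

lemma bind_Pk (n : ℕ) :
    bind₁ (fun i : Fin 3 => if i = 1 then X 0 + X 1 + X 0 * X 1 else X i) (Pk n)
    = ∑ M : Fin n → Fin n → Fin 2, if IsFishburn (ncoe M) then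
        X 0 ^ prevColWeight (ncoe M) * (X 0 + X 1 + X 0 * X 1) ^ (lastColWeight (ncoe M) - 1)
          * X 2 ^ wNEcount (ncoe M)
      else 0 := by
  rw [Pk_eq, map_sum]
  apply Finset.sum_congr rfl
  intro M _
  rw [apply_ite (bind₁ (fun i : Fin 3 => if i = 1 then X 0 + X 1 + X 0 * X 1 else X i)),
    map_zero]
  congr 1
  rw [mono, map_mul, map_mul, map_pow, map_pow, map_pow, bind₁_X_right, bind₁_X_right,
    bind₁_X_right]
  rw [if_neg (by decide : ¬ (0 : Fin 3) = 1), if_pos (rfl : (1 : Fin 3) = 1),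
    if_neg (by decide : ¬ (2 : Fin 3) = 1)]

lemma step1 (hk : 0 < k) :
    Pk (k+1) = ∑ p : (Fin k → Fin k → Fin 2) × (Fin k → Fin 3),
      if IsFishburn (ncoe p.1) ∧ Std p.1 p.2 ∧ NAY p.1 p.2 then mono (Emat p.1 p.2)
      else 0 := by
  rw [Pk_eq, ← Finset.sum_filter, ← Finset.sum_filter]
  refine Finset.sum_nbij' (i := fun M => (Dmat M, Dch M)) (j := fun p => Emat p.1 p.2)
    ?_ ?_ ?_ ?_ ?_
  · intro M hM
    rw [Finset.mem_filter] at hM ⊢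
    exact ⟨Finset.mem_univ _, Dmat_fishburn M hM.2, Dch_std M, D_nay hk M hM.2⟩
  · intro p hp
    rw [Finset.mem_filter] at hp ⊢
    exact ⟨Finset.mem_univ _, Emat_fishburn p.1 p.2 hp.2.1 hp.2.2.1 hp.2.2.2⟩
  · intro M hM
    rw [Finset.mem_filter] at hM
    exact Emat_Dmat M hM.2
  · intro p hp
    rw [Finset.mem_filter] at hp
    rw [Prod.ext_iff]
    exact ⟨Dmat_Emat p.1 p.2, Dch_Emat p.1 p.2 hp.2.2.1⟩
  · intro M hM
    rw [Finset.mem_filter] at hM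
    rw [Emat_Dmat M hM.2]



variable {k : ℕ}

noncomputable def Fpoly (hk : 0 < k) (N : Fin k → Fin k → Fin 2) (i : Fin k) (c : Fin 3) :
    MvPolynomial (Fin 3) ℤ :=
  X 0 ^ (if i ∈ Sset hk N ∧ c ≠ 1 then 1 else 0) *
  X 1 ^ (if i ∈ Sset hk N ∧ c ≠ 0 then 1 else 0) *
  X 2 ^ (if i = r0 hk N ∧ c = 0 then 1 else 0)

lemma card_filter_S (hk : 0 < k) (N : Fin k → Fin k → Fin 2) (p : Fin k → Prop) [DecidablePred p] :
    ((Sset hk N).filter p).card = ∑ i : Fin k, if i ∈ Sset hk N ∧ p i then 1 else 0 := by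
  have h : (Sset hk N).filter p = univ.filter (fun i => i ∈ Sset hk N ∧ p i) := by
    ext i
    simp [Finset.mem_filter]
  rw [h, Finset.card_filter]

lemma prod_Fpoly (hk : 0 < k) (N : Fin k → Fin k → Fin 2) (g : Fin k → Fin 3) :
    (∏ i, Fpoly hk N i (g i)) =
      X 0 ^ ((Sset hk N).filter (fun i => g i ≠ 1)).card
        * X 1 ^ ((Sset hk N).filter (fun i => g i ≠ 0)).card
        * X 2 ^ (if g (r0 hk N) = 0 then 1 else 0) := by
  simp only [Fpoly]
  rw [Finset.prod_mul_distrib, Finset.prod_mul_distrib]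
  congr 1
  · congr 1
    · rw [Finset.prod_pow_eq_pow_sum]
      rw [card_filter_S hk N (fun i => g i ≠ 1)]
    · rw [Finset.prod_pow_eq_pow_sum]
      rw [card_filter_S hk N (fun i => g i ≠ 0)]
  · rw [Finset.prod_pow_eq_pow_sum]
    congr 1
    have h : ∀ i : Fin k, (if i = r0 hk N ∧ g i = 0 then (1:ℕ) else 0)
        = if i = r0 hk N then (if g (r0 hk N) = 0 then 1 else 0) else 0 := by
      intro i
      by_cases hir : i = r0 hk N
      · rw [hir]
        simp
      · simp [hir]
    rw [Finset.sum_congr rfl (fun i _ => h i), Finset.sum_ite_eq' univ (r0 hk N)]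
    simp

lemma mono_Emat (hk : 0 < k) (N : Fin k → Fin k → Fin 2) (hF : IsFishburn (ncoe N))
    (g : Fin k → Fin 3) :
    mono (Emat N g) = X 0 ^ prevColWeight (ncoe N) * X 2 ^ wNEcount (ncoe N)
      * (∏ i, Fpoly hk N i (g i)) := by
  rw [mono, prevCol_Emat hk N g, lastCol_Emat hk N g, wNE_Emat hk N g hF, prod_Fpoly hk N g]
  have h1 : 1 + ((Sset hk N).filter (fun i => g i ≠ 0)).card - 1
      = ((Sset hk N).filter (fun i => g i ≠ 0)).card := by omega
  rw [h1, pow_add, pow_add]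
  ring



variable {k : ℕ}

noncomputable def Tset (hk : 0 < k) (N : Fin k → Fin k → Fin 2) : Fin k → Finset (Fin 3) :=
  fun i => if i ∈ Sset hk N then univ else {0}

noncomputable def gY (hk : 0 < k) (N : Fin k → Fin k → Fin 2) : Fin k → Fin 3 :=
  fun i => if i ∈ Sset hk N then 1 else 0

lemma std_iff (hk : 0 < k) (N : Fin k → Fin k → Fin 2) (g : Fin k → Fin 3) :
    Std N g ↔ ∀ i, i ∉ Sset hk N → g i = 0 := by
  constructor
  · intro h i hiS
    rw [mem_Sset, not_not] at hiS
    exact h i (Lst k hk) rfl hiS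
  · intro h i j hj hN0
    have hjL : j = Lst k hk := Fin.ext hj
    rw [hjL] at hN0
    exact h i (by rw [mem_Sset]; exact not_not.mpr hN0)

lemma mem_piT (hk : 0 < k) (N : Fin k → Fin k → Fin 2) (g : Fin k → Fin 3) :
    g ∈ Fintype.piFinset (Tset hk N) ↔ Std N g := by
  rw [Fintype.mem_piFinset, std_iff hk N g]
  constructor
  · intro h i hiS
    have := h i
    rw [Tset, if_neg hiS, Finset.mem_singleton] at this
    exact this
  · intro h i
    rw [Tset]
    by_cases hiS : i ∈ Sset hk N
    · rw [if_pos hiS]; exact Finset.mem_univ _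
    · rw [if_neg hiS, Finset.mem_singleton]; exact h i hiS

lemma nay_iff (hk : 0 < k) (N : Fin k → Fin k → Fin 2) (g : Fin k → Fin 3)
    (hstd : Std N g) : NAY N g ↔ g ≠ gY hk N := by
  constructor
  · rintro ⟨i, j, hj, hN, hg1⟩ hEq
    have hjL : j = Lst k hk := Fin.ext hj
    rw [hjL] at hN
    have hiS : i ∈ Sset hk N := mem_Sset.mpr hN
    apply hg1
    rw [hEq]
    simp [gY, hiS]
  · intro hne
    by_contra hnay
    apply hne
    funext i
    by_cases hiS : i ∈ Sset hk N
    · have hgi : g i = 1 := by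
        by_contra hgi
        exact hnay ⟨i, Lst k hk, rfl, mem_Sset.mp hiS, hgi⟩
      simp [gY, hiS, hgi]
    · simp [gY, hiS, (std_iff hk N g).mp hstd i hiS]

lemma gY_mem (hk : 0 < k) (N : Fin k → Fin k → Fin 2) :
    gY hk N ∈ Fintype.piFinset (Tset hk N) := by
  rw [Fintype.mem_piFinset]
  intro i
  rw [Tset, gY]
  by_cases hiS : i ∈ Sset hk N
  · simp [hiS]
  · simp [hiS]

lemma filter_std_nay (hk : 0 < k) (N : Fin k → Fin k → Fin 2) :
    (univ : Finset (Fin k → Fin 3)).filter (fun g => Std N g ∧ NAY N g)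
      = (Fintype.piFinset (Tset hk N)).erase (gY hk N) := by
  ext g
  rw [Finset.mem_filter, Finset.mem_erase, mem_piT]
  constructor
  · rintro ⟨-, hstd, hnay⟩
    exact ⟨(nay_iff hk N g hstd).mp hnay, hstd⟩
  · rintro ⟨hne, hstd⟩
    exact ⟨Finset.mem_univ _, hstd, (nay_iff hk N g hstd).mpr hne⟩

lemma Hi_eval (hk : 0 < k) (N : Fin k → Fin k → Fin 2) (hF : IsFishburn (ncoe N))
    (i : Fin k) : (∑ c ∈ Tset hk N i, Fpoly hk N i c)
    = if i ∈ Sset hk N then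
        (if i = r0 hk N then (X 0 * X 2 + X 0 * X 1 + X 1 : MvPolynomial (Fin 3) ℤ)
         else (X 0 + X 1 + X 0 * X 1)) else 1 := by
  rw [Tset]
  by_cases hiS : i ∈ Sset hk N
  · rw [if_pos hiS, if_pos hiS]
    by_cases hir : i = r0 hk N
    · subst hir
      rw [if_pos rfl]
      have e0 : Fpoly hk N (r0 hk N) 0 = X 0 * X 2 := by
        simp [Fpoly, hiS, show (0:Fin 3) ≠ 1 by decide]
      have e1 : Fpoly hk N (r0 hk N) 1 = X 1 := by
        simp [Fpoly, hiS, show (1:Fin 3) ≠ 0 by decide]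
      have e2 : Fpoly hk N (r0 hk N) 2 = X 0 * X 1 := by
        simp [Fpoly, hiS, show (2:Fin 3) ≠ 1 by decide, show (2:Fin 3) ≠ 0 by decide]
      rw [Fin.sum_univ_three, e0, e1, e2]
      ring
    · rw [if_neg hir]
      have e0 : Fpoly hk N i 0 = X 0 := by
        simp [Fpoly, hiS, hir, show (0:Fin 3) ≠ 1 by decide]
      have e1 : Fpoly hk N i 1 = X 1 := by
        simp [Fpoly, hiS, hir, show (1:Fin 3) ≠ 0 by decide]
      have e2 : Fpoly hk N i 2 = X 0 * X 1 := by
        simp [Fpoly, hiS, hir, show (2:Fin 3) ≠ 1 by decide, show (2:Fin 3) ≠ 0 by decide]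
      rw [Fin.sum_univ_three, e0, e1, e2]
  · rw [if_neg hiS, if_neg hiS, Finset.sum_singleton]
    have hir : i ≠ r0 hk N := fun h => hiS (h ▸ r0_mem hk N hF)
    simp [Fpoly, hiS, hir]

lemma prod_Hi (hk : 0 < k) (N : Fin k → Fin k → Fin 2) (hF : IsFishburn (ncoe N)) :
    (∏ i : Fin k, (if i ∈ Sset hk N then
        (if i = r0 hk N then (X 0 * X 2 + X 0 * X 1 + X 1 : MvPolynomial (Fin 3) ℤ)
         else (X 0 + X 1 + X 0 * X 1)) else 1))
    = (X 0 * X 2 + X 0 * X 1 + X 1) * (X 0 + X 1 + X 0 * X 1) ^ ((Sset hk N).card - 1) := by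
  rw [← Finset.prod_filter_mul_prod_filter_not univ (· ∈ Sset hk N)]
  have h2 : (∏ i ∈ univ.filter (fun i => ¬ i ∈ Sset hk N),
      (if i ∈ Sset hk N then
        (if i = r0 hk N then (X 0 * X 2 + X 0 * X 1 + X 1 : MvPolynomial (Fin 3) ℤ)
         else (X 0 + X 1 + X 0 * X 1)) else 1)) = 1 := by
    apply Finset.prod_eq_one
    intro i hi
    rw [Finset.mem_filter] at hi
    rw [if_neg hi.2]
  have h1 : univ.filter (fun i => i ∈ Sset hk N) = Sset hk N := by
    ext i; simp
  rw [h1, h2, mul_one]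
  have h3 : ∀ i ∈ Sset hk N, (if i ∈ Sset hk N then
      (if i = r0 hk N then (X 0 * X 2 + X 0 * X 1 + X 1 : MvPolynomial (Fin 3) ℤ)
       else (X 0 + X 1 + X 0 * X 1)) else 1)
      = (if i = r0 hk N then (X 0 * X 2 + X 0 * X 1 + X 1) else (X 0 + X 1 + X 0 * X 1)) := by
    intro i hi
    rw [if_pos hi]
  rw [Finset.prod_congr rfl h3, ← Finset.mul_prod_erase (Sset hk N) _ (r0_mem hk N hF),
    if_pos rfl]
  congr 1
  have h4 : ∀ i ∈ (Sset hk N).erase (r0 hk N),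
      (if i = r0 hk N then (X 0 * X 2 + X 0 * X 1 + X 1 : MvPolynomial (Fin 3) ℤ)
       else (X 0 + X 1 + X 0 * X 1)) = (X 0 + X 1 + X 0 * X 1) := by
    intro i hi
    rw [if_neg (Finset.mem_erase.mp hi).1]
  rw [Finset.prod_congr rfl h4, Finset.prod_const,
    Finset.card_erase_of_mem (r0_mem hk N hF)]

lemma prod_F_gY (hk : 0 < k) (N : Fin k → Fin k → Fin 2) (hF : IsFishburn (ncoe N)) :
    (∏ i, Fpoly hk N i (gY hk N i)) = X 1 ^ (Sset hk N).card := by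
  rw [prod_Fpoly]
  have h1 : (Sset hk N).filter (fun i => gY hk N i ≠ 1) = ∅ := by
    ext i
    simp only [Finset.mem_filter, Finset.notMem_empty, iff_false, not_and, not_not]
    intro hiS
    simp [gY, hiS]
  have h2 : (Sset hk N).filter (fun i => gY hk N i ≠ 0) = Sset hk N := by
    ext i
    simp only [Finset.mem_filter, and_iff_left_iff_imp]
    intro hiS
    simp only [gY, if_pos hiS]
    decide
  have h3 : ¬ gY hk N (r0 hk N) = 0 := by
    simp only [gY, if_pos (r0_mem hk N hF)]
    decide
  rw [h1, h2, if_neg h3]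
  simp

lemma inner_sum (hk : 0 < k) (N : Fin k → Fin k → Fin 2) (hF : IsFishburn (ncoe N)) :
    (∑ g : Fin k → Fin 3, if Std N g ∧ NAY N g then mono (Emat N g) else 0)
    = X 0 ^ prevColWeight (ncoe N) * X 2 ^ wNEcount (ncoe N) *
        ((X 0 * X 2 + X 0 * X 1 + X 1) * (X 0 + X 1 + X 0 * X 1) ^ ((Sset hk N).card - 1)
          - X 1 * X 1 ^ ((Sset hk N).card - 1)) := by
  have hstep : ∀ g : Fin k → Fin 3, (if Std N g ∧ NAY N g then mono (Emat N g) else 0)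
      = (if Std N g ∧ NAY N g then
          X 0 ^ prevColWeight (ncoe N) * X 2 ^ wNEcount (ncoe N) * ∏ i, Fpoly hk N i (g i)
        else 0) := by
    intro g
    by_cases h : Std N g ∧ NAY N g
    · rw [if_pos h, if_pos h, mono_Emat hk N hF g]
    · rw [if_neg h, if_neg h]
  rw [Finset.sum_congr rfl (fun g _ => hstep g), ← Finset.sum_filter, filter_std_nay hk N,
    Finset.sum_erase_eq_sub (gY_mem hk N), ← Finset.mul_sum, ← Finset.prod_univ_sum,
    Finset.prod_congr rfl (fun i _ => Hi_eval hk N hF i), prod_Hi hk N hF,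
    prod_F_gY hk N hF]
  have hs : (Sset hk N).card - 1 + 1 = (Sset hk N).card := by
    have := Finset.card_pos.mpr (Sset_nonempty hk N hF)
    omega
  rw [show (X 1 : MvPolynomial (Fin 3) ℤ) ^ (Sset hk N).card
      = X 1 * X 1 ^ ((Sset hk N).card - 1) from by rw [← pow_succ', hs]]
  ring



open MvPolynomial in
/-- The recurrence `P_{k+1}(x,y,z) = (xz+xy+y)·P_k(x, x+y+xy, z) − y·P_k(x,y,z)`. -/
theorem stmt_18 (k : ℕ) (hk : 1 ≤ k) :
    Pk (k + 1) =
      (X 0 * X 2 + X 0 * X 1 + X 1) *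
        (bind₁ (fun i : Fin 3 =>
          if i = 1 then X 0 + X 1 + X 0 * X 1 else X i) (Pk k)) -
      X 1 * Pk k := by
  have hk0 : 0 < k := hk
  rw [step1 hk0, bind_Pk k, Pk_eq k, Fintype.sum_prod_type, Finset.mul_sum, Finset.mul_sum,
    ← Finset.sum_sub_distrib]
  apply Finset.sum_congr rfl
  intro N _
  show (∑ g : Fin k → Fin 3,
      if IsFishburn (ncoe N) ∧ Std N g ∧ NAY N g then mono (Emat N g) else 0) = _
  by_cases hF : IsFishburn (ncoe N)
  · have hcong : ∀ g : Fin k → Fin 3,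
        (if IsFishburn (ncoe N) ∧ Std N g ∧ NAY N g then mono (Emat N g) else 0)
        = (if Std N g ∧ NAY N g then mono (Emat N g) else 0) := by
      intro g
      by_cases h : Std N g ∧ NAY N g
      · rw [if_pos ⟨hF, h⟩, if_pos h]
      · rw [if_neg (fun hc => h hc.2), if_neg h]
    rw [Finset.sum_congr rfl (fun g _ => hcong g), inner_sum hk0 N hF, if_pos hF, if_pos hF,
      mono, lastCol_N hk0 N]
    ring
  · rw [if_neg hF, if_neg hF,
      Finset.sum_eq_zero (fun g _ => by rw [if_neg (fun hc => hF hc.1)])]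
    ring

end FishburnPaper
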